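/- Let G be a finite group and r a prime with O_r(G) = 1 and Φ(G) = 1. Then the intersection of all maximal subgroups of G with index coprime to r is trivial. -/

import Mathlib

open Subgroup

/-- If `D` is normal and `M ⊔ D = ⊤`, then `[G:M] = [D : D ∩ M]` divides `|D|`. -/
private lemma index_dvd_card_of_sup_eq_top {G : Type*} [Group G] [Finite G]
    {D M : Subgroup G} (hD : D.Normal) (h : M ⊔ D = ⊤) :
    M.index ∣ Nat.card D := by
  have hrel : M.relIndex D = M.index := by
    apply Nat.card_congr
    refine Equiv.ofBijective (Quotient.map' (fun d : D => (d : G)) ?_) ⟨?_, ?_⟩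
    · intro a b hab
      rw [QuotientGroup.leftRel_apply] at hab ⊢
      simpa [Subgroup.mem_subgroupOf] using hab
    · intro a b
      induction a using Quotient.inductionOn' with
      | h a =>
      induction b using Quotient.inductionOn' with
      | h b =>
      intro hab
      simp only [Quotient.map'_mk''] at hab
      apply Quotient.sound'
      have := Quotient.exact' hab
      rw [QuotientGroup.leftRel_apply] at this ⊢
      simpa [Subgroup.mem_subgroupOf] using this
    · intro q
      induction q using Quotient.inductionOn' with
      | h g =>
      have hg : g ∈ ((D ⊔ M : Subgroup G) : Set G) := by
        rw [sup_comm, h]; trivial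
      rw [Subgroup.normal_mul] at hg
      obtain ⟨d, hd, m, hm, rfl⟩ := hg
      refine ⟨Quotient.mk'' ⟨d, hd⟩, ?_⟩
      simp only [Quotient.map'_mk'']
      apply Quotient.sound'
      rw [QuotientGroup.leftRel_apply]
      simpa using hm
  rw [← hrel]
  exact Subgroup.index_dvd_card (M.subgroupOf D)

/-- Theorem 3.7 (special case): let `G` be a finite group and `r` a prime divisor of `|G|`
with `O_r(G) = 1` (every normal `r`-subgroup is trivial) and `Φ(G) = 1`. Then the
intersection of all maximal subgroups of `G` of `r'`-index is trivial. -/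
theorem stmt_9 {G : Type*} [Group G] [Finite G] (r : ℕ) (hr : r.Prime)
    (hdvd : r ∣ Nat.card G)
    (hO : ∀ P : Subgroup G, P.Normal → IsPGroup r ↥P → P = ⊥)
    (hF : frattini G = ⊥) :
    sInf {H : Subgroup G | IsCoatom H ∧ ¬ r ∣ H.index} = ⊥ := by
  haveI : Fact r.Prime := ⟨hr⟩
  set S : Set (Subgroup G) := {H | IsCoatom H ∧ ¬ r ∣ H.index} with hS
  set D : Subgroup G := sInf S with hDdef
  have hDle : ∀ H ∈ S, D ≤ H := fun H hH => sInf_le hH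
  have hDnormal : D.Normal := by
    constructor
    intro n hn g
    have : ∀ H ∈ S, g * n * g⁻¹ ∈ H := by
      intro H hH
      have hmem : H.comap ((MulAut.conj g : G ≃* G) : G →* G) ∈ S := by
        refine ⟨(Subgroup.isCoatom_comap (MulAut.conj g : G ≃* G)).mpr hH.1, ?_⟩
        rw [Subgroup.index_comap_of_surjective _ (MulAut.conj g).surjective]
        exact hH.2
      have := hDle _ hmem hn
      simpa [Subgroup.mem_comap] using this
    rw [hDdef, Subgroup.mem_sInf]
    exact this
  haveI := hDnormal
  obtain ⟨Q⟩ : Nonempty (Sylow r ↥D) := Sylow.nonempty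
  set K : Subgroup G := Subgroup.map D.subtype (Q : Subgroup ↥D) with hKdef
  have hKD : K ≤ D := by
    rw [hKdef]
    simpa using Subgroup.map_subtype_le (Q : Subgroup ↥D)
  have hKp : IsPGroup r ↥K := Q.2.map D.subtype
  obtain ⟨P, hKP⟩ := hKp.exists_le_sylow
  have hKeq : (P : Subgroup G) ⊓ D = K := by
    refine le_antisymm ?_ (le_inf hKP hKD)
    have h2 : IsPGroup r (((P : Subgroup G) ⊓ D).comap D.subtype) :=
      (P.2.to_le inf_le_left).comap_of_injective D.subtype D.subtype_injective
    have hQle : (Q : Subgroup ↥D) ≤ ((P : Subgroup G) ⊓ D).comap D.subtype := by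
      intro x hx
      simp only [Subgroup.mem_comap, Subgroup.coe_subtype, Subgroup.mem_inf]
      exact ⟨hKP (Subgroup.mem_map_of_mem _ hx), x.2⟩
    have hmax := Q.3 h2 hQle
    have hmap : Subgroup.map D.subtype (((P : Subgroup G) ⊓ D).comap D.subtype)
        = (P : Subgroup G) ⊓ D := by
      rw [Subgroup.map_comap_eq, Subgroup.range_subtype]
      exact inf_eq_right.mpr inf_le_right
    rw [← hmap, hmax]
  have hPle : (P : Subgroup G) ≤ normalizer (K : Set G) := by
    intro x hx
    rw [Subgroup.mem_normalizer_iff]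
    intro h
    rw [← hKeq]
    simp only [Subgroup.mem_inf]
    constructor
    · rintro ⟨h1, h2⟩
      exact ⟨mul_mem (mul_mem hx h1) (inv_mem hx), hDnormal.conj_mem _ h2 x⟩
    · rintro ⟨h1, h2⟩
      have e1 : x⁻¹ * (x * h * x⁻¹) * x⁻¹⁻¹ = h := by group
      constructor
      · have := mul_mem (mul_mem (inv_mem hx) h1) hx
        have e2 : x⁻¹ * (x * h * x⁻¹) * x = h := by group
        rwa [e2] at this
      · have := hDnormal.conj_mem _ h2 x⁻¹
        rwa [e1] at this
  have hNtop : normalizer (K : Set G) = ⊤ := by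
    by_contra hne
    obtain ⟨M, hM, hle⟩ := (eq_top_or_exists_le_coatom (normalizer (K : Set G))).resolve_left hne
    have hMS : M ∈ S := by
      refine ⟨hM, fun hdvdM => ?_⟩
      have h1 : M.index ∣ (P : Subgroup G).index :=
        Subgroup.index_dvd_of_le (hPle.trans hle)
      exact P.not_dvd_index (hdvdM.trans h1)
    have hfr : normalizer (K : Set G) ⊔ D = ⊤ := Sylow.normalizer_sup_eq_top Q
    have htop : (⊤ : Subgroup G) ≤ M := by
      rw [← hfr]
      exact sup_le hle (hDle M hMS)
    exact hM.1 (top_le_iff.mp htop)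
  have hKnormal : K.Normal := Subgroup.normalizer_eq_top_iff.mp hNtop
  have hKbot : K = ⊥ := hO K hKnormal hKp
  have hQbot : (Q : Subgroup ↥D) = ⊥ := by
    rw [eq_bot_iff]
    intro x hx
    have : (x : G) ∈ K := Subgroup.mem_map_of_mem _ hx
    rw [hKbot, Subgroup.mem_bot] at this
    rw [Subgroup.mem_bot]
    exact Subtype.ext this
  have hrD : ¬ r ∣ Nat.card ↥D := by
    intro hdvdD
    have hcard := Q.card_eq_multiplicity
    rw [hQbot] at hcard
    simp only [Subgroup.card_bot] at hcard
    have hk : 1 ≤ (Nat.card ↥D).factorization r :=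
      (Nat.Prime.dvd_iff_one_le_factorization hr Nat.card_pos.ne').mp hdvdD
    have : 1 < r ^ (Nat.card ↥D).factorization r :=
      Nat.one_lt_pow (by omega) hr.one_lt
    omega
  have hDM : ∀ M : Subgroup G, IsCoatom M → D ≤ M := by
    intro M hM
    by_cases hdvdM : r ∣ M.index
    · by_contra hnle
      have hlt : M < M ⊔ D := lt_of_le_of_ne le_sup_left (fun hEq => hnle (by
        rw [hEq]; exact le_sup_right))
      have hsup : M ⊔ D = ⊤ := hM.2 _ hlt
      have hdd : M.index ∣ Nat.card ↥D := index_dvd_card_of_sup_eq_top hDnormal hsup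
      exact hrD (hdvdM.trans hdd)
    · exact hDle M ⟨hM, hdvdM⟩
  have hfinal : D ≤ frattini G := by
    unfold frattini Order.radical
    exact le_iInf₂ fun M hM => hDM M hM
  rw [hF, le_bot_iff] at hfinal
  exact hfinal
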